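/- Let D be ℝ, ℂ, or the real quaternions ℍ, let n ≥ 1, and let μ ∈ {1, -1}. Then the Jordan block A = J(μ,n) ∈ GL(n,D) is strongly reversible in GL(n,D); that is, there exists an invertible n×n matrix g over D with g² = I and g·A·g⁻¹ = A⁻¹. -/

import Mathlib

open Matrix

set_option maxHeartbeats 1000000

/-- The Jordan block `J(λ, m)`: an `m × m` matrix with `λ` on the diagonal,
`1` on the superdiagonal, and `0` elsewhere. -/
def jordanBlock {D : Type*} [Ring D] (lam : D) (m : ℕ) : Matrix (Fin m) (Fin m) D :=
  Matrix.of fun i j => if i = j then lam else if (i : ℕ) + 1 = (j : ℕ) then 1 else 0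

/-- The realification embedding `Ψ : M(n,ℂ) → M(2n,ℝ)`, replacing each complex entry
`z` by the 2×2 real block `((Re z, Im z), (-Im z, Re z))`. -/
def Psi {n : ℕ} (A : Matrix (Fin n) (Fin n) ℂ) :
    Matrix (Fin n × Fin 2) (Fin n × Fin 2) ℝ :=
  Matrix.of fun p q =>
    !![(A p.1 q.1).re, (A p.1 q.1).im; -(A p.1 q.1).im, (A p.1 q.1).re] p.2 q.2

/-- The standard embedding of `ℂ` into the real quaternions,
sending `a + b i` to `a + b 𝐢`. -/
def toQuat (z : ℂ) : Quaternion ℝ := ⟨z.re, z.im, 0, 0⟩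

/-- `X ∈ gl(n,D)` is `Ad_{GL(n,D)}`-real: there is an invertible matrix `g`
with `g X g⁻¹ = -X`. -/
def AdjReal {D : Type*} [Ring D] {ι : Type*} [Fintype ι] [DecidableEq ι]
    (X : Matrix ι ι D) : Prop :=
  ∃ g : (Matrix ι ι D)ˣ, g.val * X * (g⁻¹).val = -X

/-- `X ∈ gl(n,D)` is strongly `Ad_{GL(n,D)}`-real: there is an invertible matrix `g`
with `g² = I` and `g X g⁻¹ = -X`. -/
def StronglyAdjReal {D : Type*} [Ring D] {ι : Type*} [Fintype ι] [DecidableEq ι]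
    (X : Matrix ι ι D) : Prop :=
  ∃ g : (Matrix ι ι D)ˣ, g * g = 1 ∧ g.val * X * (g⁻¹).val = -X

/-- `A` is reversible in `GL(n,D)`: `A` is invertible and there is an invertible
matrix `g` with `g A g⁻¹ = A⁻¹`. -/
def Reversible {D : Type*} [Ring D] {ι : Type*} [Fintype ι] [DecidableEq ι]
    (A : Matrix ι ι D) : Prop :=
  ∃ a : (Matrix ι ι D)ˣ, a.val = A ∧ ∃ g : (Matrix ι ι D)ˣ, g * a * g⁻¹ = a⁻¹

/-- `A` is strongly reversible in `GL(n,D)`: `A` is invertible and there is an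
invertible matrix `g` with `g² = I` and `g A g⁻¹ = A⁻¹`. -/
def StronglyReversible {D : Type*} [Ring D] {ι : Type*} [Fintype ι] [DecidableEq ι]
    (A : Matrix ι ι D) : Prop :=
  ∃ a : (Matrix ι ι D)ˣ, a.val = A ∧ ∃ g : (Matrix ι ι D)ˣ, g * g = 1 ∧ g * a * g⁻¹ = a⁻¹

namespace Stmt5Aux

/-- The entry function of the reversing involution: `gg e i j` is the `(i,j)` entry
(extended to all of `ℕ × ℕ`) of the matrix of the substitution `x ↦ -x/(1+ e x)`. -/
def gg (e : ℤ) (i j : ℕ) : ℤ :=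
  if i ≤ j then (-1) ^ j * e ^ (j - i) * ((j - 1).choose (j - i) : ℤ) else 0

lemma gg_big (e : ℤ) {i j : ℕ} (h : j < i) : gg e i j = 0 := if_neg (by omega)

lemma key1 (e : ℤ) (h2 : e * e = 1) (i j : ℕ) :
    e * gg e (i + 1) (j + 1) + e * gg e i j + gg e (i + 1) j = 0 := by
  rcases lt_trichotomy i j with h | rfl | h
  · obtain ⟨d, rfl⟩ : ∃ d, j = i + (d + 1) := ⟨j - i - 1, by omega⟩
    rw [gg, gg, gg, if_pos (by omega), if_pos (by omega), if_pos (by omega)]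
    rw [show i + (d + 1) + 1 - (i + 1) = d + 1 by omega,
      show i + (d + 1) - i = d + 1 by omega,
      show i + (d + 1) - (i + 1) = d by omega,
      show i + (d + 1) + 1 - 1 = i + d + 1 by omega,
      show i + (d + 1) - 1 = i + d by omega]
    have hch : (((i + d + 1).choose (d + 1) : ℤ))
        = ((i + d).choose d : ℤ) + ((i + d).choose (d + 1) : ℤ) := by
      push_cast [Nat.choose_succ_succ (i + d) d]
      ring
    linear_combination ((-1 : ℤ) ^ (i + d) * e ^ d * ((i + d).choose d : ℤ)) * h2
      + (e * (-1 : ℤ) ^ (i + d) * e ^ (d + 1)) * hch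
  · rw [gg, gg, gg_big e (by omega), if_pos le_rfl, if_pos le_rfl]
    simp only [Nat.sub_self, pow_zero, Nat.choose_zero_right, Nat.cast_one]
    ring
  · rw [gg_big e (by omega), gg_big e (by omega), gg_big e (by omega)]
    ring

lemma key2 (e : ℤ) (i j N : ℕ) (hj : j < N) :
    (∑ k ∈ Finset.range N, gg e i k * gg e k j) = if i = j then 1 else 0 := by
  by_cases hij : i ≤ j
  · have hsub : Finset.Icc i j ⊆ Finset.range N := by
      intro k hk
      rw [Finset.mem_Icc] at hk
      rw [Finset.mem_range]
      omega
    rw [← Finset.sum_subset hsub (by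
      intro k hk hk'
      rw [Finset.mem_range] at hk
      rw [Finset.mem_Icc] at hk'
      by_cases h : i ≤ k
      · rw [gg_big e (show j < k by omega), mul_zero]
      · rw [gg, if_neg h, zero_mul])]
    rcases eq_or_lt_of_le hij with rfl | hlt
    · rw [Finset.Icc_self, Finset.sum_singleton, if_pos rfl, gg, if_pos le_rfl]
      simp only [Nat.sub_self, pow_zero, Nat.choose_zero_right, Nat.cast_one, mul_one]
      rw [← pow_add]
      exact Even.neg_one_pow ⟨i, rfl⟩
    · rw [if_neg (by omega)]
      by_cases hi0 : i = 0
      · subst hi0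
        apply Finset.sum_eq_zero
        intro k hk
        rcases Nat.eq_zero_or_pos k with rfl | hk1
        · have hz : gg e 0 j = 0 := by
            rw [gg, if_pos (Nat.zero_le _), show j - 0 = j by omega,
              Nat.choose_eq_zero_of_lt (by omega)]
            simp
          rw [hz, mul_zero]
        · have hz : gg e 0 k = 0 := by
            rw [gg, if_pos (Nat.zero_le _), show k - 0 = k by omega,
              Nat.choose_eq_zero_of_lt (by omega)]
            simp
          rw [hz, zero_mul]
      · obtain ⟨r, rfl⟩ : ∃ r, i = r + 1 := ⟨i - 1, by omega⟩
        obtain ⟨D, rfl⟩ : ∃ D, j = (r + 1) + (D + 1) := ⟨j - r - 2, by omega⟩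
        rw [← Finset.Ico_add_one_right_eq_Icc, Finset.sum_Ico_eq_sum_range,
          show r + 1 + (D + 1) + 1 - (r + 1) = D + 2 by omega]
        have hterm : ∀ m ∈ Finset.range (D + 2),
            gg e (r + 1) (r + 1 + m) * gg e (r + 1 + m) (r + 1 + (D + 1))
            = ((-1) ^ (D + 1) * e ^ (D + 1) * ((r + D + 1).choose r : ℤ))
              * ((-1) ^ m * ((D + 1).choose m : ℤ)) := by
          intro m hm
          rw [Finset.mem_range] at hm
          rw [gg, gg, if_pos (show r + 1 ≤ r + 1 + m by omega),
            if_pos (show r + 1 + m ≤ r + 1 + (D + 1) by omega),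
            show r + 1 + m - (r + 1) = m by omega,
            show r + 1 + m - 1 = r + m by omega,
            show r + 1 + (D + 1) - (r + 1 + m) = D + 1 - m by omega,
            show r + 1 + (D + 1) - 1 = r + D + 1 by omega]
          have hc1 : (r + m).choose m = (r + m).choose r := by
            have h := Nat.choose_symm (show r ≤ r + m by omega)
            rw [show r + m - r = m by omega] at h
            exact h
          have hc2 : (r + D + 1).choose (D + 1 - m) = (r + D + 1).choose (r + m) := by
            have h := Nat.choose_symm (show r + m ≤ r + D + 1 by omega)
            rw [show r + D + 1 - (r + m) = D + 1 - m by omega] at h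
            exact h
          have hc3 : (r + D + 1).choose (r + m) * (r + m).choose r
              = (r + D + 1).choose r * (D + 1).choose m := by
            have := Nat.choose_mul (n := r + D + 1) (k := r + m) (s := r) (by omega)
            rw [this, show r + D + 1 - r = D + 1 by omega, show r + m - r = m by omega]
          have hs : ((-1 : ℤ)) ^ (r + 1 + m) * (-1) ^ (r + 1 + (D + 1))
              = (-1) ^ m * (-1) ^ (D + 1) := by
            rw [← pow_add, show r + 1 + m + (r + 1 + (D + 1)) = 2 * (r + 1) + (m + (D + 1)) by omega,
              pow_add, pow_mul, neg_one_sq, one_pow, one_mul, pow_add]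
          have hpow : e ^ m * e ^ (D + 1 - m) = e ^ (D + 1) := by
            rw [← pow_add, show m + (D + 1 - m) = D + 1 by omega]
          have hcast : ((r + m).choose m : ℤ) * ((r + D + 1).choose (D + 1 - m) : ℤ)
              = ((r + D + 1).choose r : ℤ) * ((D + 1).choose m : ℤ) := by
            rw [hc1, hc2, mul_comm]
            exact_mod_cast hc3
          linear_combination ((e ^ m * e ^ (D + 1 - m)) * ((r + m).choose m : ℤ)
              * ((r + D + 1).choose (D + 1 - m) : ℤ)) * hs
            + ((-1 : ℤ) ^ m * (-1) ^ (D + 1) * ((r + m).choose m : ℤ)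
              * ((r + D + 1).choose (D + 1 - m) : ℤ)) * hpow
            + ((-1 : ℤ) ^ m * (-1) ^ (D + 1) * e ^ (D + 1)) * hcast
        rw [Finset.sum_congr rfl hterm, ← Finset.mul_sum,
          Int.alternating_sum_range_choose, if_neg (by omega), mul_zero]
  · rw [if_neg (by omega)]
    apply Finset.sum_eq_zero
    intro k hk
    by_cases h : i ≤ k
    · rw [gg_big e (show j < k by omega), mul_zero]
    · rw [gg, if_neg h, zero_mul]

/-- The reversing involution as a matrix. -/
def Gm (e : ℤ) (n : ℕ) : Matrix (Fin n) (Fin n) ℤ :=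
  Matrix.of fun i j => gg e (i : ℕ) (j : ℕ)

lemma jordan_mul (e : ℤ) {n : ℕ} (X : Matrix (Fin n) (Fin n) ℤ) (i j : Fin n) :
    (jordanBlock e n * X) i j
      = e * X i j + (if h : (i : ℕ) + 1 < n then X ⟨(i : ℕ) + 1, h⟩ j else 0) := by
  rw [Matrix.mul_apply]
  have hterm : ∀ k : Fin n, jordanBlock e n i k * X k j
      = (if i = k then e * X k j else 0) + (if (i : ℕ) + 1 = (k : ℕ) then X k j else 0) := by
    intro k
    simp only [jordanBlock, Matrix.of_apply]
    by_cases h1 : i = k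
    · subst h1
      rw [if_pos rfl, if_pos rfl, if_neg (by omega)]
      ring
    · rw [if_neg h1, if_neg h1]
      by_cases h2 : (i : ℕ) + 1 = (k : ℕ)
      · rw [if_pos h2, if_pos h2]
        ring
      · rw [if_neg h2, if_neg h2]
        ring
  rw [Finset.sum_congr rfl fun k _ => hterm k, Finset.sum_add_distrib]
  congr 1
  · rw [Finset.sum_ite_eq]
    simp
  · by_cases h : (i : ℕ) + 1 < n
    · rw [dif_pos h]
      rw [Finset.sum_eq_single_of_mem (⟨(i : ℕ) + 1, h⟩ : Fin n) (Finset.mem_univ _)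
        (fun k _ hk => if_neg fun hc => hk (Fin.ext (by simpa using hc.symm)))]
      exact if_pos rfl
    · rw [dif_neg h]
      exact Finset.sum_eq_zero fun k _ => if_neg (by have := k.isLt; omega)

lemma mul_jordan (e : ℤ) {n : ℕ} (X : Matrix (Fin n) (Fin n) ℤ) (i j : Fin n) :
    (X * jordanBlock e n) i j
      = X i j * e + (if h : 1 ≤ (j : ℕ) then X i ⟨(j : ℕ) - 1, by omega⟩ else 0) := by
  rw [Matrix.mul_apply]
  have hterm : ∀ k : Fin n, X i k * jordanBlock e n k j
      = (if k = j then X i k * e else 0) + (if (k : ℕ) + 1 = (j : ℕ) then X i k else 0) := by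
    intro k
    simp only [jordanBlock, Matrix.of_apply]
    by_cases h1 : k = j
    · subst h1
      rw [if_pos rfl, if_pos rfl, if_neg (by omega)]
      ring
    · rw [if_neg h1, if_neg h1]
      by_cases h2 : (k : ℕ) + 1 = (j : ℕ)
      · rw [if_pos h2, if_pos h2]
        ring
      · rw [if_neg h2, if_neg h2]
        ring
  rw [Finset.sum_congr rfl fun k _ => hterm k, Finset.sum_add_distrib]
  congr 1
  · rw [Finset.sum_ite_eq']
    simp
  · by_cases h : 1 ≤ (j : ℕ)
    · rw [dif_pos h]
      rw [Finset.sum_eq_single_of_mem (⟨(j : ℕ) - 1, by omega⟩ : Fin n) (Finset.mem_univ _)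
        (fun k _ hk => if_neg fun hc => hk (Fin.ext (by simp; omega)))]
      exact if_pos (by simp; omega)
    · rw [dif_neg h]
      exact Finset.sum_eq_zero fun k _ => if_neg (by omega)

lemma Gm_mul_Gm (e : ℤ) (n : ℕ) : Gm e n * Gm e n = 1 := by
  ext i j
  rw [Matrix.mul_apply, Matrix.one_apply]
  show (∑ k : Fin n, gg e (i : ℕ) (k : ℕ) * gg e (k : ℕ) (j : ℕ)) = _
  rw [Fin.sum_univ_eq_sum_range (fun k => gg e (i : ℕ) k * gg e k (j : ℕ)) n,
    key2 e (i : ℕ) (j : ℕ) n j.isLt]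
  by_cases h : i = j
  · subst h
    simp
  · rw [if_neg h, if_neg (fun hc => h (Fin.ext hc))]

lemma JGJ (e : ℤ) (h2 : e * e = 1) (n : ℕ) :
    jordanBlock e n * Gm e n * jordanBlock e n = Gm e n := by
  ext i j
  rw [mul_jordan e (jordanBlock e n * Gm e n) i j, jordan_mul, Gm]
  show _ = gg e (i : ℕ) (j : ℕ)
  by_cases hi : (i : ℕ) + 1 < n <;> by_cases hj : 1 ≤ (j : ℕ)
  · rw [dif_pos hj, dif_pos hi, jordan_mul, dif_pos hi]
    simp only [Gm, Matrix.of_apply]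
    have hkey := key1 e h2 (i : ℕ) ((j : ℕ) - 1)
    rw [show (j : ℕ) - 1 + 1 = (j : ℕ) by omega] at hkey
    linear_combination hkey + gg e (i : ℕ) (j : ℕ) * h2
  · rw [dif_neg hj, dif_pos hi]
    simp only [Gm, Matrix.of_apply]
    have hz : (j : ℕ) = 0 := by omega
    rw [hz, gg_big e (show (0:ℕ) < (i : ℕ) + 1 by omega)]
    linear_combination gg e (i : ℕ) 0 * h2
  · rw [dif_pos hj, dif_neg hi, jordan_mul, dif_neg hi]
    simp only [Gm, Matrix.of_apply]
    have hz : gg e (i : ℕ) ((j : ℕ) - 1) = 0 := by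
      have h1 := i.isLt
      have h3 := j.isLt
      exact gg_big e (by omega)
    rw [hz]
    linear_combination gg e (i : ℕ) (j : ℕ) * h2
  · rw [dif_neg hj, dif_neg hi]
    simp only [Gm, Matrix.of_apply]
    linear_combination gg e (i : ℕ) (j : ℕ) * h2

lemma GJGJ (e : ℤ) (h2 : e * e = 1) (n : ℕ) :
    Gm e n * jordanBlock e n * Gm e n * jordanBlock e n = 1 := by
  rw [mul_assoc (Gm e n) (jordanBlock e n) (Gm e n),
    mul_assoc (Gm e n) (jordanBlock e n * Gm e n) (jordanBlock e n),
    JGJ e h2 n, Gm_mul_Gm]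

lemma J_mul_inv (e : ℤ) (h2 : e * e = 1) (n : ℕ) :
    jordanBlock e n * (Gm e n * jordanBlock e n * Gm e n) = 1 := by
  simp only [← mul_assoc]
  rw [JGJ e h2 n, Gm_mul_Gm]

lemma inv_mul_J (e : ℤ) (h2 : e * e = 1) (n : ℕ) :
    Gm e n * jordanBlock e n * Gm e n * jordanBlock e n = 1 := GJGJ e h2 n

lemma map_jordanBlock {D : Type*} [Ring D] (f : ℤ →+* D) (e : ℤ) (n : ℕ) :
    (jordanBlock e n).map f = jordanBlock (f e) n := by
  ext i j
  simp only [jordanBlock, Matrix.map_apply, Matrix.of_apply]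
  rw [apply_ite f, apply_ite f, _root_.map_one, _root_.map_zero]

theorem main {D : Type*} [Ring D] (n : ℕ) (μ : D) (hμ : μ = 1 ∨ μ = -1) :
    StronglyReversible (jordanBlock μ n) := by
  obtain ⟨e, h2, he⟩ : ∃ e : ℤ, e * e = 1 ∧ (Int.castRingHom D) e = μ := by
    rcases hμ with rfl | rfl
    · exact ⟨1, by norm_num, by simp⟩
    · exact ⟨-1, by norm_num, by simp⟩
  set f : ℤ →+* D := Int.castRingHom D with hf
  have hA : (jordanBlock e n).map f = jordanBlock μ n := by
    rw [map_jordanBlock, he]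
  have hGG : (Gm e n).map f * (Gm e n).map f = 1 := by
    rw [← Matrix.map_mul, Gm_mul_Gm, Matrix.map_one f (map_zero f) (map_one f)]
  have h1 : jordanBlock μ n * (Gm e n * jordanBlock e n * Gm e n).map f = 1 := by
    rw [← hA, ← Matrix.map_mul, J_mul_inv e h2 n, Matrix.map_one f (map_zero f) (map_one f)]
  have h1' : (Gm e n * jordanBlock e n * Gm e n).map f * jordanBlock μ n = 1 := by
    rw [← hA, ← Matrix.map_mul, inv_mul_J e h2 n, Matrix.map_one f (map_zero f) (map_one f)]
  let a : (Matrix (Fin n) (Fin n) D)ˣ :=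
    ⟨jordanBlock μ n, (Gm e n * jordanBlock e n * Gm e n).map f, h1, h1'⟩
  let g : (Matrix (Fin n) (Fin n) D)ˣ := ⟨(Gm e n).map f, (Gm e n).map f, hGG, hGG⟩
  have hgu : g * g = 1 := Units.ext (by simpa using hGG)
  refine ⟨a, rfl, g, hgu, ?_⟩
  have hinv : g⁻¹ = g := inv_eq_of_mul_eq_one_right hgu
  rw [hinv]
  have hgaga : g * a * g * a = 1 := by
    apply Units.ext
    simp only [Units.val_mul, Units.val_one]
    show (Gm e n).map f * jordanBlock μ n * ((Gm e n).map f) * jordanBlock μ n = 1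
    rw [← hA, ← Matrix.map_mul, ← Matrix.map_mul, ← Matrix.map_mul, inv_mul_J e h2 n,
      Matrix.map_one f (map_zero f) (map_one f)]
  exact eq_inv_of_mul_eq_one_left hgaga

end Stmt5Aux

/-- For `D = ℝ, ℂ, ℍ`, `n ≥ 1` and `μ ∈ {1,-1}`, the Jordan block
`A = J(μ,n) ∈ GL(n,D)` is strongly reversible in `GL(n,D)`. -/
theorem stmt5 (n : ℕ) (hn : 1 ≤ n) :
    (∀ μ : ℝ, μ = 1 ∨ μ = -1 → StronglyReversible (jordanBlock μ n)) ∧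
    (∀ μ : ℂ, μ = 1 ∨ μ = -1 → StronglyReversible (jordanBlock μ n)) ∧
    (∀ μ : Quaternion ℝ, μ = 1 ∨ μ = -1 → StronglyReversible (jordanBlock μ n)) :=
  ⟨fun μ h => Stmt5Aux.main n μ h, fun μ h => Stmt5Aux.main n μ h,
    fun μ h => Stmt5Aux.main n μ h⟩
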